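/- Every plactic monoid of finite rank n is left reversible: for all u, v ∈ P_n there exist X, Y ∈ P_n with uX = vY. -/

import Mathlib

/-- The Knuth relations on words over the alphabet `Fin n`:
`xzy = zxy` for `x ≤ y < z` and `yxz = yzx` for `x < y ≤ z`. -/
def KnuthRel (n : ℕ) : FreeMonoid (Fin n) → FreeMonoid (Fin n) → Prop := fun a b =>
  (∃ x y z : Fin n, x ≤ y ∧ y < z ∧
      a = FreeMonoid.of x * FreeMonoid.of z * FreeMonoid.of y ∧
      b = FreeMonoid.of z * FreeMonoid.of x * FreeMonoid.of y) ∨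
  (∃ x y z : Fin n, x < y ∧ y ≤ z ∧
      a = FreeMonoid.of y * FreeMonoid.of x * FreeMonoid.of z ∧
      b = FreeMonoid.of y * FreeMonoid.of z * FreeMonoid.of x)

/-- The plactic monoid of rank `n`, presented by generators `Fin n` and the
Knuth relations. -/
def Plactic (n : ℕ) := (conGen (KnuthRel n)).Quotient

instance (n : ℕ) : Monoid (Plactic n) :=
  inferInstanceAs (Monoid (conGen (KnuthRel n)).Quotient)

/-- The canonical projection from the free monoid to the plactic monoid. -/
def Plactic.mk (n : ℕ) : FreeMonoid (Fin n) →* Plactic n := Con.mk' _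

namespace PlacticAux

variable {n : ℕ}

/-- The image of a single letter in the plactic monoid. -/
def e (x : Fin n) : Plactic n := Plactic.mk n (FreeMonoid.of x)

theorem rel1 (x y z : Fin n) (h1 : x ≤ y) (h2 : y < z) :
    e x * e z * e y = e z * e x * e y := by
  have : Plactic.mk n (FreeMonoid.of x * FreeMonoid.of z * FreeMonoid.of y) =
      Plactic.mk n (FreeMonoid.of z * FreeMonoid.of x * FreeMonoid.of y) :=
    (Con.eq _).mpr (ConGen.Rel.of _ _ (Or.inl ⟨x, y, z, h1, h2, rfl, rfl⟩))
  simpa [e, map_mul] using this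

theorem rel2 (x y z : Fin n) (h1 : x < y) (h2 : y ≤ z) :
    e y * e x * e z = e y * e z * e x := by
  have : Plactic.mk n (FreeMonoid.of y * FreeMonoid.of x * FreeMonoid.of z) =
      Plactic.mk n (FreeMonoid.of y * FreeMonoid.of z * FreeMonoid.of x) :=
    (Con.eq _).mpr (ConGen.Rel.of _ _ (Or.inr ⟨x, y, z, h1, h2, rfl, rfl⟩))
  simpa [e, map_mul] using this

section NeZero
variable [NeZero n]
open Fin.NatCast

/-- The letter with value `k` (as a natural number cast into `Fin n`). -/
def el (k : ℕ) : Plactic n := e (k : Fin n)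

/-- The column word `(h-1)(h-2)...(1)(0)` in the plactic monoid. -/
def colP : ℕ → Plactic n
  | 0 => 1
  | k + 1 => el k * colP k

theorem e_eq_el (x : Fin n) (v : ℕ) (hv : x.val = v) : e x = el v := by
  have hvn : v < n := hv ▸ x.isLt
  unfold el
  congr 1
  exact Fin.ext (by rw [Fin.val_cast_of_lt hvn, hv])

/-- Merging: `x * col x.val = col (x.val + 1)`. -/
theorem merge (x : Fin n) (v : ℕ) (hv : x.val = v) :
    e x * colP v = colP (v + 1) := by
  rw [e_eq_el x v hv]; rfl

/-- Sliding a big letter rightwards through a column of smaller letters. -/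
theorem slide (z : Fin n) : ∀ k : ℕ, k ≤ z.val →
    el k * (e z * colP k) = colP (k + 1) * e z := by
  intro k
  induction k with
  | zero => intro _; show el 0 * (e z * 1) = el 0 * 1 * e z; simp [mul_assoc]
  | succ m ih =>
    intro hk
    have hz := z.isLt
    have hmn : m < n := by omega
    have hm1n : m + 1 < n := by omega
    have hlt : ((m : ℕ) : Fin n) < ((m + 1 : ℕ) : Fin n) := by
      rw [Fin.lt_def, Fin.val_cast_of_lt hmn, Fin.val_cast_of_lt hm1n]; omega
    have hle : ((m + 1 : ℕ) : Fin n) ≤ z := by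
      rw [Fin.le_def, Fin.val_cast_of_lt hm1n]; exact hk
    have hswap : el (m + 1) * e z * el m = el (m + 1) * el m * e z :=
      (rel2 ((m : ℕ) : Fin n) ((m + 1 : ℕ) : Fin n) z hlt hle).symm
    calc el (m + 1) * (e z * colP (m + 1))
        = el (m + 1) * (e z * (el m * colP m)) := rfl
      _ = el (m + 1) * e z * el m * colP m := by simp [mul_assoc]
      _ = el (m + 1) * el m * e z * colP m := by rw [hswap]
      _ = el (m + 1) * (el m * (e z * colP m)) := by simp [mul_assoc]
      _ = el (m + 1) * (colP (m + 1) * e z) := by rw [ih (by omega)]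
      _ = colP (m + 2) * e z := by show _ = el (m+1) * colP (m+1) * e z; simp [mul_assoc]

/-- A letter `x` commutes with any column of height `h > x.val`. -/
theorem e_comm_colP (x : Fin n) : ∀ h : ℕ, h ≤ n → x.val < h →
    e x * colP h = colP h * e x := by
  intro h
  induction h with
  | zero => intro _ hx; omega
  | succ m ih =>
    intro hn hx
    rcases Nat.lt_succ_iff_lt_or_eq.mp hx with hlt | heq
    · -- x.val < m, so m ≥ 1; write colP m = el (m-1) * colP (m-1)
      obtain ⟨p, rfl⟩ : ∃ p, m = p + 1 := ⟨m - 1, by omega⟩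
      have hpn : p < n := by omega
      have hp1n : p + 1 < n := by omega
      have hxle : x ≤ ((p : ℕ) : Fin n) := by
        rw [Fin.le_def, Fin.val_cast_of_lt hpn]; omega
      have hplt : ((p : ℕ) : Fin n) < ((p + 1 : ℕ) : Fin n) := by
        rw [Fin.lt_def, Fin.val_cast_of_lt hpn, Fin.val_cast_of_lt hp1n]; omega
      have hswap : e x * el (p + 1) * el p = el (p + 1) * e x * el p :=
        rel1 x ((p : ℕ) : Fin n) ((p + 1 : ℕ) : Fin n) hxle hplt
      calc e x * colP (p + 2)
          = e x * (el (p + 1) * (el p * colP p)) := rfl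
        _ = e x * el (p + 1) * el p * colP p := by simp [mul_assoc]
        _ = el (p + 1) * e x * el p * colP p := by rw [hswap]
        _ = el (p + 1) * (e x * (el p * colP p)) := by simp [mul_assoc]
        _ = el (p + 1) * (e x * colP (p + 1)) := rfl
        _ = el (p + 1) * (colP (p + 1) * e x) := by rw [ih (by omega) hlt]
        _ = colP (p + 2) * e x := by show _ = el (p+1) * colP (p+1) * e x; simp [mul_assoc]
    · -- x.val = m
      calc e x * colP (m + 1)
          = e x * (el m * colP m) := rfl
        _ = el m * (e x * colP m) := by
            rw [e_eq_el x m heq]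
        _ = colP (m + 1) * e x := slide x m (le_of_eq heq.symm)

/-- Pointwise Kronecker delta. -/
def δ (v : ℕ) : ℕ → ℕ := fun h => if h = v then 1 else 0

theorem add_δ_apply_ne (c : ℕ → ℕ) (v h : ℕ) (hne : h ≠ v) : (c + δ v) h = c h := by
  show c h + (if h = v then 1 else 0) = c h
  rw [if_neg hne]
  rfl

theorem add_δ_apply_eq (c : ℕ → ℕ) (v : ℕ) : (c + δ v) v = c v + 1 := by
  show c v + (if v = v then 1 else 0) = c v + 1
  rw [if_pos rfl]

/-- The staircase: product of `c h` copies of `colP h`, for `h` from `m` down to `1`. -/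
def NNa : ℕ → (ℕ → ℕ) → Plactic n
  | 0, _ => 1
  | m + 1, c => colP (m + 1) ^ c (m + 1) * NNa m c

theorem NNa_congr : ∀ (m : ℕ) (c₁ c₂ : ℕ → ℕ), (∀ h, 1 ≤ h → h ≤ m → c₁ h = c₂ h) →
    (NNa m c₁ : Plactic n) = NNa m c₂ := by
  intro m
  induction m with
  | zero => intro _ _ _; rfl
  | succ p ih =>
    intro c₁ c₂ hc
    show colP (p + 1) ^ c₁ (p + 1) * NNa p c₁ = colP (p + 1) ^ c₂ (p + 1) * NNa p c₂
    rw [hc (p + 1) (by omega) (le_refl _), ih c₁ c₂ (fun h h1 h2 => hc h h1 (by omega))]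

/-- Merging a letter into the staircase at its own height. -/
theorem mergeNNa (x : Fin n) (v : ℕ) (hv : x.val = v) (hvn : v + 1 ≤ n) (c : ℕ → ℕ) :
    e x * NNa v (c + δ v) = colP (v + 1) * NNa v c := by
  cases v with
  | zero =>
    show e x * 1 = colP 1 * 1
    rw [mul_one, mul_one]
    show e x = el 0 * 1
    rw [mul_one, e_eq_el x 0 hv]
  | succ w =>
    have h1 : NNa w (c + δ (w + 1)) = (NNa w c : Plactic n) :=
      NNa_congr w _ _ (fun h _ h2 => add_δ_apply_ne c (w + 1) h (by omega))
    have h2 : (c + δ (w + 1)) (w + 1) = c (w + 1) + 1 := add_δ_apply_eq c (w + 1)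
    calc e x * NNa (w + 1) (c + δ (w + 1))
        = e x * (colP (w + 1) ^ ((c + δ (w+1)) (w + 1)) * NNa w (c + δ (w + 1))) := rfl
      _ = e x * (colP (w + 1) ^ (c (w + 1) + 1) * NNa w c) := by rw [h1, h2]
      _ = e x * (colP (w + 1) * colP (w + 1) ^ (c (w + 1)) * NNa w c) := by
          rw [pow_succ']
      _ = e x * colP (w + 1) * (colP (w + 1) ^ (c (w + 1)) * NNa w c) := by
          simp [mul_assoc]
      _ = colP (w + 2) * (colP (w + 1) ^ (c (w + 1)) * NNa w c) := by
          rw [merge x (w + 1) hv]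
      _ = colP (w + 2) * NNa (w + 1) c := rfl

/-- Prepending a letter to the staircase: consumes a column of its height,
produces a column one taller. -/
theorem step (x : Fin n) : ∀ m : ℕ, x.val < m → m ≤ n → ∀ c : ℕ → ℕ,
    e x * NNa m (c + δ x.val) = NNa m (c + δ (x.val + 1)) := by
  intro m
  induction m with
  | zero => intro h; omega
  | succ p ih =>
    intro hxm hmn c
    have hc0 : Commute (e x) (colP (p + 1)) := e_comm_colP x (p + 1) hmn hxm
    have hcomm : Commute (e x) (colP (p + 1) ^ ((c + δ x.val) (p + 1))) :=
      hc0.pow_right _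
    rcases Nat.lt_succ_iff_lt_or_eq.mp hxm with hlt | heq
    · -- x.val < p
      have e1 : (c + δ x.val) (p + 1) = c (p + 1) := add_δ_apply_ne _ _ _ (by omega)
      have e2 : (c + δ (x.val + 1)) (p + 1) = c (p + 1) := add_δ_apply_ne _ _ _ (by omega)
      calc e x * NNa (p + 1) (c + δ x.val)
          = e x * (colP (p + 1) ^ ((c + δ x.val) (p + 1)) * NNa p (c + δ x.val)) := rfl
        _ = colP (p + 1) ^ ((c + δ x.val) (p + 1)) * (e x * NNa p (c + δ x.val)) := by
            rw [← mul_assoc, hcomm.eq, mul_assoc]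
        _ = colP (p + 1) ^ (c (p + 1)) * NNa p (c + δ (x.val + 1)) := by
            rw [e1, ih hlt (by omega) c]
        _ = NNa (p + 1) (c + δ (x.val + 1)) := by
            show _ = colP (p+1) ^ ((c + δ (x.val + 1)) (p + 1)) * NNa p (c + δ (x.val+1))
            rw [e2]
    · -- x.val = p : merge here
      have e1 : (c + δ x.val) (p + 1) = c (p + 1) := add_δ_apply_ne _ _ _ (by omega)
      have e2 : (c + δ (x.val + 1)) (p + 1) = c (p + 1) + 1 := by
        rw [heq]; exact add_δ_apply_eq c (p + 1)
      have h1 : NNa p (c + δ (x.val + 1)) = (NNa p c : Plactic n) :=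
        NNa_congr p _ _ (fun h _ h2 => add_δ_apply_ne _ _ _ (by omega))
      calc e x * NNa (p + 1) (c + δ x.val)
          = e x * (colP (p + 1) ^ ((c + δ x.val) (p + 1)) * NNa p (c + δ x.val)) := rfl
        _ = colP (p + 1) ^ ((c + δ x.val) (p + 1)) * (e x * NNa p (c + δ x.val)) := by
            rw [← mul_assoc, hcomm.eq, mul_assoc]
        _ = colP (p + 1) ^ (c (p + 1)) * (e x * NNa p (c + δ p)) := by rw [e1, heq]
        _ = colP (p + 1) ^ (c (p + 1)) * (colP (p + 1) * NNa p c) := by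
            rw [mergeNNa x p heq (by omega) c]
        _ = colP (p + 1) ^ (c (p + 1)) * colP (p + 1) * NNa p c := by rw [mul_assoc]
        _ = colP (p + 1) ^ (c (p + 1) + 1) * NNa p c := by rw [pow_succ]
        _ = NNa (p + 1) (c + δ (x.val + 1)) := by
            show _ = colP (p+1) ^ ((c + δ (x.val + 1)) (p + 1)) * NNa p (c + δ (x.val+1))
            rw [e2, h1]

/-- The image of a word (as a list of letters) in the plactic monoid. -/
def w2p : List (Fin n) → Plactic n
  | [] => 1
  | x :: l => e x * w2p l

/-- Heights consumed by a word: one column of height `x.val` per letter `x`. -/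
def consume : List (Fin n) → (ℕ → ℕ)
  | [] => 0
  | x :: l => δ x.val + consume l

/-- Heights produced by a word: one column of height `x.val + 1` per letter `x`. -/
def produce : List (Fin n) → (ℕ → ℕ)
  | [] => 0
  | x :: l => δ (x.val + 1) + produce l

theorem master : ∀ (l : List (Fin n)) (c : ℕ → ℕ),
    w2p l * NNa n (c + consume l) = NNa n (c + produce l) := by
  intro l
  induction l with
  | nil => intro c; show 1 * NNa n (c + 0) = NNa n (c + 0); rw [one_mul]
  | cons x l ih =>
    intro c
    calc w2p (x :: l) * NNa n (c + consume (x :: l))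
        = e x * (w2p l * NNa n (c + (δ x.val + consume l))) := by
          show e x * w2p l * _ = _; rw [mul_assoc]; rfl
      _ = e x * (w2p l * NNa n ((c + δ x.val) + consume l)) := by rw [add_assoc]
      _ = e x * NNa n ((c + δ x.val) + produce l) := by rw [ih]
      _ = e x * NNa n ((c + produce l) + δ x.val) := by
          rw [add_right_comm]
      _ = NNa n ((c + produce l) + δ (x.val + 1)) := step x n x.isLt (le_refl n) _
      _ = NNa n (c + produce (x :: l)) := by
          rw [add_comm (c + produce l), ← add_assoc]
          show NNa n (δ (x.val + 1) + c + produce l) = _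
          rw [add_comm (δ (x.val+1)) c, add_assoc]
          rfl

theorem mk_eq_w2p : ∀ l : List (Fin n),
    Plactic.mk n (FreeMonoid.ofList l) = w2p l := by
  intro l
  induction l with
  | nil => exact map_one _
  | cons x l ih =>
    have : FreeMonoid.ofList (x :: l) = FreeMonoid.of x * FreeMonoid.ofList l := rfl
    rw [this, map_mul, ih]; rfl

end NeZero

end PlacticAux

/-- The plactic monoid of any finite rank is left reversible: any two
principal right ideals intersect. -/
theorem plactic_left_reversible (n : ℕ) (u v : Plactic n) :
    ∃ X Y : Plactic n, u * X = v * Y := by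
  cases n with
  | zero =>
    obtain ⟨a, rfl⟩ := Con.mk'_surjective (c := conGen (KnuthRel 0)) u
    obtain ⟨b, rfl⟩ := Con.mk'_surjective (c := conGen (KnuthRel 0)) v
    refine ⟨1, 1, ?_⟩
    have ha : a = 1 := by
      cases ha' : FreeMonoid.toList a with
      | nil =>
        have := congrArg FreeMonoid.ofList ha'
        simpa using this
      | cons x l => exact absurd x.isLt (by omega)
    have hb : b = 1 := by
      cases hb' : FreeMonoid.toList b with
      | nil =>
        have := congrArg FreeMonoid.ofList hb'
        simpa using this
      | cons x l => exact absurd x.isLt (by omega)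
    rw [ha, hb]
  | succ m =>
    haveI : NeZero (m + 1) := ⟨Nat.succ_ne_zero m⟩
    obtain ⟨a, rfl⟩ := Con.mk'_surjective (c := conGen (KnuthRel (m + 1))) u
    obtain ⟨b, rfl⟩ := Con.mk'_surjective (c := conGen (KnuthRel (m + 1))) v
    refine ⟨PlacticAux.NNa (m + 1)
        (PlacticAux.produce (FreeMonoid.toList b) + PlacticAux.consume (FreeMonoid.toList a)),
      PlacticAux.NNa (m + 1)
        (PlacticAux.produce (FreeMonoid.toList a) + PlacticAux.consume (FreeMonoid.toList b)),
      ?_⟩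
    have ha : (Con.mk' (conGen (KnuthRel (m + 1)))) a
        = PlacticAux.w2p (FreeMonoid.toList a) := PlacticAux.mk_eq_w2p _
    have hb : (Con.mk' (conGen (KnuthRel (m + 1)))) b
        = PlacticAux.w2p (FreeMonoid.toList b) := PlacticAux.mk_eq_w2p _
    rw [ha, hb, PlacticAux.master _ (PlacticAux.produce (FreeMonoid.toList b)),
        PlacticAux.master _ (PlacticAux.produce (FreeMonoid.toList a)),
        add_comm (PlacticAux.produce (FreeMonoid.toList b))
          (PlacticAux.produce (FreeMonoid.toList a))]
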